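/- Consider M hypotheses with full-support distributions P_1,…,P_M on a finite alphabet X, and the nearest-neighbor test on sequences of length n that declares hypothesis argmin_j D(P_{x⃗}‖P_j). For any n-type P_{x⃗}, the error probability averaged over the type class (under any priors summing to 1) satisfies P(e | P_{x⃗}) ≤ 2^{-n(min_{i≠j} max{D(P_{x⃗}‖P_i), D(P_{x⃗}‖P_j)} - (log₂ M)/n)}. -/
import Mathlib


open Finset
open scoped Classical

/-- Empirical type of a sequence. -/
noncomputable def typeOf {α : Type*} [Fintype α] [DecidableEq α] {n : ℕ} (xv : Fin n → α) :
    α → ℝ :=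
  fun a => ((Finset.univ.filter fun i => xv i = a).card : ℝ) / n

/-- Base-2 KL divergence. -/
noncomputable def KL {α : Type*} [Fintype α] (P Q : α → ℝ) : ℝ :=
  ∑ x, P x * Real.logb 2 (P x / Q x)

private lemma rpow_sum' {ι : Type*} (s : Finset ι) (f : ι → ℝ) :
    (2:ℝ) ^ (∑ i ∈ s, f i) = ∏ i ∈ s, (2:ℝ) ^ (f i) := by
  induction s using Finset.cons_induction with
  | empty => simp
  | cons a s ha ih =>
      rw [Finset.sum_cons, Finset.prod_cons, Real.rpow_add two_pos, ih]

theorem stmt14 {α : Type*} [Fintype α] [DecidableEq α] {M n : ℕ} (hM : 2 ≤ M) (hn : 0 < n)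
    (Ps : Fin M → α → ℝ)
    (hpos : ∀ i x, 0 < Ps i x) (hsum : ∀ i, ∑ x, Ps i x = 1)
    (hdist : ∀ i j, i ≠ j → Ps i ≠ Ps j)
    (prior : Fin M → ℝ) (hprior : ∀ i, 0 < prior i) (hprior1 : ∑ i, prior i = 1)
    (d : (Fin n → α) → Fin M)
    (hd : ∀ (xv : Fin n → α) (j : Fin M),
      KL (typeOf xv) (Ps (d xv)) ≤ KL (typeOf xv) (Ps j))
    (T : α → ℝ) (hT : ∃ xv : Fin n → α, typeOf xv = T) :
    (∑ xv : Fin n → α, if typeOf xv = T then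
        ∑ i, prior i * (if d xv = i then 0 else ∏ k, Ps i (xv k)) else 0) ≤
      (2:ℝ) ^ (-(n:ℝ) *
        (sInf {y : ℝ | ∃ i j : Fin M, i ≠ j ∧ y = max (KL T (Ps i)) (KL T (Ps j))} -
          Real.logb 2 M / n)) := by
  classical
  obtain ⟨xv0, hxv0⟩ := hT
  have hnR : (0:ℝ) < n := by exact_mod_cast hn
  set S : Set ℝ := {y : ℝ | ∃ i j : Fin M, i ≠ j ∧ y = max (KL T (Ps i)) (KL T (Ps j))}
    with hSdef
  set E := sInf S with hEdef
  -- S is finite and nonempty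
  have hSfin : S.Finite := by
    have hsub : S ⊆ Set.range fun p : Fin M × Fin M =>
        max (KL T (Ps p.1)) (KL T (Ps p.2)) := by
      rintro y ⟨i, j, -, rfl⟩
      exact ⟨(i, j), rfl⟩
    exact (Set.finite_range _).subset hsub
  have hSbdd : BddBelow S := hSfin.bddBelow
  -- key inequality : E ≤ KL T (Ps i) whenever i ≠ d xv, xv of type T
  have hEle : ∀ xv : Fin n → α, typeOf xv = T → ∀ i, d xv ≠ i → E ≤ KL T (Ps i) := by
    intro xv hxv i hne
    have h1 : KL T (Ps (d xv)) ≤ KL T (Ps i) := by rw [← hxv]; exact hd xv i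
    have hmem : KL T (Ps i) ∈ S := ⟨i, d xv, Ne.symm hne, (max_eq_left h1).symm⟩
    exact csInf_le hSbdd hmem
  have hTnn : ∀ a, 0 ≤ T a := by
    intro a; rw [← hxv0]
    unfold typeOf
    positivity
  -- count identity for any xv of type T
  have key : ∀ xv : Fin n → α, typeOf xv = T → ∀ i : Fin M, d xv ≠ i →
      (∏ k, Ps i (xv k)) ≤ (∏ k, T (xv k)) * (2:ℝ) ^ (-((n:ℝ) * E)) := by
    intro xv hxv i hne
    have hTpos : ∀ k, 0 < T (xv k) := by
      intro k
      rw [← hxv]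
      unfold typeOf
      apply div_pos _ hnR
      have hk : k ∈ Finset.univ.filter fun j => xv j = xv k := by simp
      have := Finset.card_pos.mpr ⟨k, hk⟩
      exact_mod_cast this
    have hcount : ∀ a, (n:ℝ) * T a = ((Finset.univ.filter fun k => xv k = a).card : ℝ) := by
      intro a; rw [← hxv]; unfold typeOf; field_simp
    -- sum of logs identity
    have hsumlog : ∑ k, Real.logb 2 (Ps i (xv k) / T (xv k)) = -((n:ℝ) * KL T (Ps i)) := by
      have lhs : ∑ k, Real.logb 2 (Ps i (xv k) / T (xv k))
          = ∑ a, ((Finset.univ.filter fun k => xv k = a).card : ℝ)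
              * Real.logb 2 (Ps i a / T a) := by
        rw [← Finset.sum_fiberwise' Finset.univ (fun k => xv k)
          (fun a => Real.logb 2 (Ps i a / T a))]
        refine Finset.sum_congr rfl fun a _ => ?_
        rw [Finset.sum_const, nsmul_eq_mul]
      rw [lhs]
      rw [KL, Finset.mul_sum, ← Finset.sum_neg_distrib]
      refine Finset.sum_congr rfl fun a _ => ?_
      rw [← hcount a]
      rcases eq_or_lt_of_le (hTnn a) with h0 | h0
      · simp [← h0]
      · have hP := hpos i a
        have : Ps i a / T a = (T a / Ps i a)⁻¹ := by
          rw [inv_div]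
        rw [this, Real.logb_inv]
        ring
    have hprodpos : (0:ℝ) < ∏ k, T (xv k) := Finset.prod_pos fun k _ => hTpos k
    have hsplit : (∏ k, Ps i (xv k))
        = (∏ k, T (xv k)) * ∏ k, (Ps i (xv k) / T (xv k)) := by
      rw [← Finset.prod_mul_distrib]
      refine Finset.prod_congr rfl fun k _ => ?_
      rw [eq_comm, ← mul_div_assoc, mul_comm, mul_div_assoc, div_self (hTpos k).ne', mul_one]
    have hratio : (∏ k, (Ps i (xv k) / T (xv k))) = (2:ℝ) ^ (-((n:ℝ) * KL T (Ps i))) := by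
      rw [← hsumlog, rpow_sum']
      refine Finset.prod_congr rfl fun k _ => ?_
      rw [Real.rpow_logb two_pos (by norm_num) (div_pos (hpos i (xv k)) (hTpos k))]
    have hKL : E ≤ KL T (Ps i) := hEle xv hxv i hne
    have hexp : -((n:ℝ) * KL T (Ps i)) ≤ -((n:ℝ) * E) := by nlinarith
    calc (∏ k, Ps i (xv k))
        = (∏ k, T (xv k)) * (2:ℝ) ^ (-((n:ℝ) * KL T (Ps i))) := by rw [hsplit, hratio]
      _ ≤ (∏ k, T (xv k)) * (2:ℝ) ^ (-((n:ℝ) * E)) := by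
          exact mul_le_mul_of_nonneg_left
            (Real.rpow_le_rpow_of_exponent_le one_le_two hexp) hprodpos.le
  -- bound the full sum by 2^(-nE)
  have step1 : (∑ xv : Fin n → α, if typeOf xv = T then
        ∑ i, prior i * (if d xv = i then 0 else ∏ k, Ps i (xv k)) else 0)
      ≤ ∑ xv : Fin n → α,
          (if typeOf xv = T then (∏ k, T (xv k)) else 0) * (2:ℝ) ^ (-((n:ℝ) * E)) := by
    refine Finset.sum_le_sum fun xv _ => ?_
    by_cases hxv : typeOf xv = T
    · simp only [hxv, if_pos]
      have hinner : ∀ i : Fin M,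
          prior i * (if d xv = i then 0 else ∏ k, Ps i (xv k))
            ≤ prior i * ((∏ k, T (xv k)) * (2:ℝ) ^ (-((n:ℝ) * E))) := by
        intro i
        refine mul_le_mul_of_nonneg_left ?_ (hprior i).le
        by_cases hdi : d xv = i
        · simp only [hdi, if_pos]
          have : (0:ℝ) ≤ ∏ k, T (xv k) := Finset.prod_nonneg fun k _ => hTnn _
          positivity
        · simp only [hdi, if_neg, not_false_iff]
          exact key xv hxv i hdi
      calc (∑ i, prior i * (if d xv = i then 0 else ∏ k, Ps i (xv k)))
          ≤ ∑ i, prior i * ((∏ k, T (xv k)) * (2:ℝ) ^ (-((n:ℝ) * E))) :=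
            Finset.sum_le_sum fun i _ => hinner i
        _ = (∏ k, T (xv k)) * (2:ℝ) ^ (-((n:ℝ) * E)) := by
            rw [← Finset.sum_mul, hprior1, one_mul]
    · simp [hxv]
  have hTsum : ∑ a, T a = 1 := by
    rw [← hxv0]
    unfold typeOf
    rw [← Finset.sum_div]
    rw [show (∑ a, ((Finset.univ.filter fun i => xv0 i = a).card : ℝ)) = n by
      have := Finset.sum_fiberwise' Finset.univ (fun k => xv0 k) (fun _ : α => (1:ℝ))
      simp only [Finset.sum_const, nsmul_eq_mul, mul_one] at this
      rw [this]; simp]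
    field_simp
  have step2 : (∑ xv : Fin n → α, if typeOf xv = T then (∏ k, T (xv k)) else 0) ≤ 1 := by
    calc (∑ xv : Fin n → α, if typeOf xv = T then (∏ k, T (xv k)) else 0)
        ≤ ∑ xv : Fin n → α, ∏ k, T (xv k) := by
          refine Finset.sum_le_sum fun xv _ => ?_
          by_cases hxv : typeOf xv = T
          · simp [hxv]
          · simp only [hxv, if_neg, not_false_iff]
            exact Finset.prod_nonneg fun k _ => hTnn _
      _ = ∏ k : Fin n, ∑ a, T a := by
          rw [Finset.prod_univ_sum]
          simp [Fintype.piFinset_univ]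
      _ = 1 := by rw [hTsum]; simp
  have step3 : (∑ xv : Fin n → α, if typeOf xv = T then
        ∑ i, prior i * (if d xv = i then 0 else ∏ k, Ps i (xv k)) else 0)
      ≤ (2:ℝ) ^ (-((n:ℝ) * E)) := by
    calc (∑ xv : Fin n → α, if typeOf xv = T then
          ∑ i, prior i * (if d xv = i then 0 else ∏ k, Ps i (xv k)) else 0)
        ≤ ∑ xv : Fin n → α,
            (if typeOf xv = T then (∏ k, T (xv k)) else 0) * (2:ℝ) ^ (-((n:ℝ) * E)) := step1
      _ = (∑ xv : Fin n → α, if typeOf xv = T then (∏ k, T (xv k)) else 0)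
            * (2:ℝ) ^ (-((n:ℝ) * E)) := by rw [Finset.sum_mul]
      _ ≤ 1 * (2:ℝ) ^ (-((n:ℝ) * E)) := by
          refine mul_le_mul_of_nonneg_right step2 ?_
          positivity
      _ = (2:ℝ) ^ (-((n:ℝ) * E)) := one_mul _
  refine step3.trans ?_
  apply Real.rpow_le_rpow_of_exponent_le one_le_two
  have hlogM : (0:ℝ) ≤ Real.logb 2 M :=
    Real.logb_nonneg one_lt_two (by exact_mod_cast hM.trans' (by norm_num))
  have hcanc : (n:ℝ) * (Real.logb 2 M / n) = Real.logb 2 M := by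
    field_simp
  nlinarith [hcanc]
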